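/- arXiv:2512.19208 — 5 statements merged into one kernel-verified Lean document; each statement's English description precedes it below -/
import Mathlib

section
/- Let $p \in [1,\infty)$ and $h: M \to N$ measurable with separable range. For every $f \in \mathcal{L}^p_h(M,N)$ there exists a sequence $(B_n)$ of measurable sets of finite $\mu_M$-measure such that, up to a $\mu_M$-null set, $\{x : f(x) \neq h(x)\} = \bigcup_n B_n$ and $h$ is bounded on each $B_n$. -/
open MeasureTheory Set TopologicalSpace Filter

noncomputable def Dp {M : Type*} {N : Type*} [MeasurableSpace M] [PseudoMetricSpace N]
    (mu : Measure M) (p : ENNReal) (f g : M → N) : ENNReal :=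
  eLpNorm (fun x => dist (f x) (g x)) p mu

theorem stmt6 {M N : Type*} [MeasurableSpace M] [MetricSpace N]
    [MeasurableSpace N] [BorelSpace N]
    (μ : Measure M) (p : ENNReal) (hp : 1 ≤ p) (hptop : p ≠ ⊤)
    (h : M → N) (hm : Measurable h) (hs : IsSeparable (Set.range h))
    (f : M → N) (hfm : Measurable f) (hfs : IsSeparable (Set.range f))
    (hfin : Dp μ p f h < ⊤) :
    ∃ B : ℕ → Set M,
      (∀ n, MeasurableSet (B n) ∧ μ (B n) < ⊤ ∧ Bornology.IsBounded (h '' B n)) ∧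
      μ (({x | f x ≠ h x} \ ⋃ n, B n) ∪ ((⋃ n, B n) \ {x | f x ≠ h x})) = 0 := by
  by_cases hM : Nonempty M
  swap
  · have : IsEmpty M := not_nonempty_iff.1 hM
    refine ⟨fun _ => ∅, fun n => ⟨MeasurableSet.empty, by simp, by simp⟩, ?_⟩
    have h0 : ∀ s : Set M, μ s = 0 := fun s => by
      rw [Set.eq_empty_of_isEmpty s]; exact measure_empty
    exact h0 _
  have hp0 : p ≠ 0 := by
    intro hp0; rw [hp0] at hp; exact absurd hp (by simp)
  have hfsm : StronglyMeasurable f := stronglyMeasurable_iff_measurable_separable.2 ⟨hfm, hfs⟩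
  have hhsm : StronglyMeasurable h := stronglyMeasurable_iff_measurable_separable.2 ⟨hm, hs⟩
  have hd : StronglyMeasurable (fun x => dist (f x) (h x)) := hfsm.dist hhsm
  have hmem : MemLp (fun x => dist (f x) (h x)) p μ := ⟨hd.aestronglyMeasurable, hfin⟩
  -- countable dense sequence in range h
  obtain ⟨c, hc_count, hc_sub⟩ := hs
  have hcne : c.Nonempty := by
    rcases Set.range_nonempty h with ⟨z, hz⟩
    by_contra hce
    rw [Set.not_nonempty_iff_eq_empty] at hce
    rw [hce, closure_empty, Set.subset_empty_iff] at hc_sub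
    exact (Set.nonempty_iff_ne_empty.1 ⟨z, hz⟩) hc_sub
  obtain ⟨y, hy⟩ := hc_count.exists_eq_range hcne
  -- the sets
  set A : ℕ → Set M := fun i => {x | ((i : NNReal) + 1)⁻¹ ≤ ‖dist (f x) (h x)‖₊} with hA
  have hAmeas : ∀ i, MeasurableSet (A i) := by
    intro i
    exact measurableSet_le measurable_const hd.measurable.nnnorm
  have hAfin : ∀ i, μ (A i) < ⊤ := by
    intro i
    exact hmem.meas_ge_lt_top hp0 hptop (by positivity)
  let e : ℕ ≃ ℕ × ℕ := (Denumerable.eqv (ℕ × ℕ)).symm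
  refine ⟨fun n => A (e n).1 ∩ h ⁻¹' Metric.ball (y (e n).2) 1, fun n =>
    ⟨(hAmeas _).inter (hm measurableSet_ball), lt_of_le_of_lt (measure_mono inter_subset_left)
      (hAfin _), ?_⟩, ?_⟩
  · exact Metric.isBounded_ball.subset (by
      rintro _ ⟨x, ⟨-, hx⟩, rfl⟩; exact hx)
  · have key : (⋃ n, A (e n).1 ∩ h ⁻¹' Metric.ball (y (e n).2) 1) = {x | f x ≠ h x} := by
      ext x
      simp only [mem_iUnion, mem_inter_iff, mem_setOf_eq, mem_preimage, Metric.mem_ball]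
      constructor
      · rintro ⟨n, hx, -⟩
        intro hfx
        rw [hA] at hx
        simp only [mem_setOf_eq, hfx, dist_self, nnnorm_zero] at hx
        exact absurd hx (by simp [← NNReal.coe_le_coe])
      · intro hne
        have hdpos : 0 < dist (f x) (h x) := dist_pos.2 hne
        obtain ⟨i, hi⟩ := exists_nat_one_div_lt hdpos
        have hxh : h x ∈ closure c := hc_sub ⟨x, rfl⟩
        rw [hy] at hxh
        obtain ⟨z, ⟨j, rfl⟩, hj⟩ := Metric.mem_closure_iff.1 hxh 1 one_pos
        refine ⟨e.symm (i, j), ?_, ?_⟩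
        · have he : e (e.symm (i, j)) = (i, j) := e.apply_symm_apply _
          rw [he, hA]
          simp only [mem_setOf_eq]
          rw [← NNReal.coe_le_coe]
          push_cast
          rw [Real.norm_eq_abs, abs_of_nonneg dist_nonneg]
          rw [one_div] at hi
          exact le_of_lt hi
        · rw [e.apply_symm_apply]
          exact hj
    rw [key]
    simp
end

section
/- Let $p \in [1,\infty]$ and $h$ measurable with separable range. If $\mu_M$ is not purely infinite, then $N$ admits an isometric (up to a constant positive scaling factor) embedding onto a closed subset of the metric space $(L^p_h(M,N), D_p)$. -/
open MeasureTheory Set TopologicalSpace Filter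

theorem stmt9 {M N : Type*} [MeasurableSpace M] [MetricSpace N]
    [MeasurableSpace N] [BorelSpace N]
    (μ : Measure M) (p : ENNReal) (hp : 1 ≤ p)
    (hμ : ∃ s, MeasurableSet s ∧ μ s ≠ 0 ∧ μ s ≠ ⊤)
    (h : M → N) (hm : Measurable h) (hs : IsSeparable (Set.range h)) :
    ∃ (i : N → M → N) (c : ENNReal), 0 < c ∧ c < ⊤ ∧
      (∀ y, Measurable (i y) ∧ IsSeparable (Set.range (i y)) ∧ Dp μ p (i y) h < ⊤) ∧
      (∀ y y', Dp μ p (i y) (i y') = c * ENNReal.ofReal (dist y y')) ∧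
      (∀ f : M → N, Measurable f → IsSeparable (Set.range f) → Dp μ p f h < ⊤ →
        ∀ y : ℕ → N,
          Tendsto (fun n => Dp μ p (i (y n)) f) atTop (nhds 0) →
          ∃ y₀ : N, f =ᵐ[μ] i y₀) := by
  classical
  obtain ⟨s, hsm, hs0, hstop⟩ := hμ
  have hp0 : p ≠ 0 := fun hh => by simp [hh] at hp
  obtain ⟨x₀, -⟩ : s.Nonempty := nonempty_of_measure_ne_zero hs0
  set n₀ : N := h x₀ with hn₀
  have hsU : s = ⋃ k : ℕ, s ∩ h ⁻¹' Metric.closedBall n₀ k := by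
    ext x
    simp only [mem_iUnion, mem_inter_iff, mem_preimage, Metric.mem_closedBall]
    constructor
    · intro hx; exact ⟨⌈dist (h x) n₀⌉₊, hx, Nat.le_ceil _⟩
    · rintro ⟨k, hx, _⟩; exact hx
  obtain ⟨k, hk⟩ : ∃ k : ℕ, μ (s ∩ h ⁻¹' Metric.closedBall n₀ k) ≠ 0 := by
    by_contra hcon
    push_neg at hcon
    exact hs0 (by rw [hsU]; exact measure_iUnion_null hcon)
  set t : Set M := s ∩ h ⁻¹' Metric.closedBall n₀ k with ht_def
  have htm : MeasurableSet t := hsm.inter (hm measurableSet_closedBall)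
  have httop : μ t ≠ ⊤ := fun htt =>
    hstop (top_le_iff.mp (htt ▸ measure_mono inter_subset_left))
  have htb : ∀ x ∈ t, dist (h x) n₀ ≤ k := fun x hx => hx.2
  set i : N → M → N := fun y => t.piecewise (fun _ => y) h with hi_def
  set c : ENNReal := μ t ^ (1 / p.toReal) with hc_def
  have hc0 : 0 < c := ENNReal.rpow_pos (pos_iff_ne_zero.mpr hk) httop
  have hctop : c < ⊤ := ENNReal.rpow_lt_top_of_nonneg (by positivity) httop
  -- key computation
  have hkey : ∀ d : ℝ, 0 ≤ d →
      eLpNorm (t.indicator fun _ => d) p μ = ENNReal.ofReal d * c := by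
    intro d hd
    rw [eLpNorm_indicator_const' htm hk hp0, Real.enorm_eq_ofReal hd]
  -- strong measurability of h and i y
  have hhsm : StronglyMeasurable h := stronglyMeasurable_iff_measurable_separable.mpr ⟨hm, hs⟩
  have him : ∀ y, Measurable (i y) := fun y => Measurable.piecewise htm measurable_const hm
  have hisep : ∀ y, IsSeparable (Set.range (i y)) := by
    intro y
    refine (((countable_singleton y).isSeparable).union hs).mono ?_
    rintro _ ⟨x, rfl⟩
    by_cases hx : x ∈ t
    · simp [hi_def, Set.piecewise, hx]
    · simp only [hi_def, Set.piecewise, hx, if_false]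
      exact Or.inr ⟨x, rfl⟩
  have hism : ∀ y, StronglyMeasurable (i y) := fun y =>
    stronglyMeasurable_iff_measurable_separable.mpr ⟨him y, hisep y⟩
  refine ⟨i, c, hc0, hctop, ?_, ?_, ?_⟩
  · -- each i y is in the space
    intro y
    refine ⟨him y, hisep y, ?_⟩
    have hb : ∀ x, ‖dist (i y x) (h x)‖ ≤ (t.indicator fun _ => dist y n₀ + k) x := by
      intro x
      rw [Real.norm_eq_abs, abs_of_nonneg dist_nonneg]
      by_cases hx : x ∈ t
      · simp only [hi_def, Set.piecewise, hx, if_true, Set.indicator_of_mem hx]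
        calc dist y (h x) ≤ dist y n₀ + dist n₀ (h x) := dist_triangle _ _ _
        _ ≤ dist y n₀ + k := by
            have := htb x hx; rw [dist_comm] at this; linarith
      · simp [hi_def, Set.piecewise, hx, Set.indicator_of_notMem hx]
    calc Dp μ p (i y) h ≤ eLpNorm (t.indicator fun _ => dist y n₀ + k) p μ :=
          eLpNorm_mono_real hb
      _ = ENNReal.ofReal (dist y n₀ + k) * c := hkey _ (by positivity)
      _ < ⊤ := ENNReal.mul_lt_top ENNReal.ofReal_lt_top hctop
  · -- isometry up to constant
    intro y y'
    have : (fun x => dist (i y x) (i y' x)) = t.indicator fun _ => dist y y' := by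
      funext x
      by_cases hx : x ∈ t <;>
        simp [hi_def, Set.piecewise, hx, Set.indicator, dist_self]
    rw [Dp, this, hkey _ dist_nonneg, mul_comm]
  · -- closedness
    intro f hfm hfsep hfD y hty
    have hfsm : StronglyMeasurable f := stronglyMeasurable_iff_measurable_separable.mpr ⟨hfm, hfsep⟩
    -- off t, f = h almost everywhere
    have hoff : ∀ n, eLpNorm (tᶜ.indicator fun x => dist (f x) (h x)) p μ ≤
        Dp μ p (i (y n)) f := by
      intro n
      apply eLpNorm_mono_real
      intro x
      rw [Real.norm_eq_abs]
      by_cases hx : x ∈ t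
      · simp [Set.indicator_of_notMem (by simpa using hx : x ∉ tᶜ), dist_nonneg]
      · simp only [Set.indicator_of_mem (by simpa using hx : x ∈ tᶜ), hi_def,
          Set.piecewise, hx, if_false]
        rw [abs_of_nonneg dist_nonneg, dist_comm]
    have hoff0 : eLpNorm (tᶜ.indicator fun x => dist (f x) (h x)) p μ = 0 :=
      le_antisymm (ge_of_tendsto' hty hoff) zero_le
    have hoffsm : AEStronglyMeasurable (tᶜ.indicator fun x => dist (f x) (h x)) μ :=
      ((hfsm.dist hhsm).indicator htm.compl).aestronglyMeasurable
    have hoffae : ∀ᵐ x ∂μ, x ∉ t → f x = h x := by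
      have := (eLpNorm_eq_zero_iff hoffsm hp0).mp hoff0
      filter_upwards [this] with x hx hxt
      have : dist (f x) (h x) = 0 := by
        simpa [Set.indicator_of_mem (by simpa using hxt : x ∈ tᶜ)] using hx
      exact dist_eq_zero.mp this
    -- tendsto in measure and a.e. subsequence
    have hGsm : ∀ n, AEStronglyMeasurable (fun x => dist (i (y n) x) (f x)) μ := fun n =>
      ((hism (y n)).dist hfsm).aestronglyMeasurable
    have htend : Tendsto (fun n =>
        eLpNorm ((fun x => dist (i (y n) x) (f x)) - (0 : M → ℝ)) p μ) atTop (nhds 0) := by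
      have heq : (fun n => eLpNorm ((fun x => dist (i (y n) x) (f x)) - (0 : M → ℝ)) p μ)
          = fun n => Dp μ p (i (y n)) f := by
        funext n; congr 1; funext x; simp [Dp]
      rw [heq]; exact hty
    have htim : TendstoInMeasure μ (fun n x => dist (i (y n) x) (f x)) atTop (0 : M → ℝ) :=
      tendstoInMeasure_of_tendsto_eLpNorm hp0 hGsm aestronglyMeasurable_const htend
    obtain ⟨ns, hns, hae⟩ := htim.exists_seq_tendsto_ae
    -- pick a good point in t
    have hex : ∃ x₁ ∈ t, Tendsto (fun j => dist (i (y (ns j)) x₁) (f x₁)) atTop (nhds 0) := by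
      by_contra hcon
      push_neg at hcon
      have hsub : t ⊆ {x | ¬ Tendsto (fun j => dist (i (y (ns j)) x) (f x)) atTop
          (nhds ((0 : M → ℝ) x))} := by
        intro x hx
        simpa using hcon x hx
      have : μ t = 0 := measure_mono_null hsub hae
      exact hk this
    obtain ⟨x₁, hx₁t, hx₁⟩ := hex
    have hy₀ : Tendsto (fun j => y (ns j)) atTop (nhds (f x₁)) := by
      apply tendsto_iff_dist_tendsto_zero.mpr
      simpa [hi_def, Set.piecewise, hx₁t] using hx₁
    refine ⟨f x₁, ?_⟩
    filter_upwards [hae, hoffae] with x hx hx2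
    by_cases hxt : x ∈ t
    · have h1 : Tendsto (fun j => y (ns j)) atTop (nhds (f x)) := by
        apply tendsto_iff_dist_tendsto_zero.mpr
        simpa [hi_def, Set.piecewise, hxt] using hx
      have : f x = f x₁ := tendsto_nhds_unique h1 hy₀
      simp [hi_def, Set.piecewise, hxt, this]
    · simp [hi_def, Set.piecewise, hxt, hx2 hxt]
end

section
/- Let $p \in [1,\infty)$, $h$ measurable with separable range. If $L^p_h(M,N)$ is nontrivial (contains an element not a.e.\ equal to $h$) and separable as a metric space, then $(N,d_N)$ is separable. -/
open MeasureTheory Set TopologicalSpace Filter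

theorem stmt14 {M N : Type*} [MeasurableSpace M] [MetricSpace N]
    [MeasurableSpace N] [BorelSpace N]
    (μ : Measure M) (p : ENNReal) (hp : 1 ≤ p) (hptop : p ≠ ⊤)
    (h : M → N) (hm : Measurable h) (hs : IsSeparable (Set.range h))
    (hnontriv : ∃ f : M → N, Measurable f ∧ IsSeparable (Set.range f) ∧
      Dp μ p f h < ⊤ ∧ ¬ f =ᵐ[μ] h)
    (hsepL : ∃ D : ℕ → M → N,
      (∀ n, Measurable (D n) ∧ IsSeparable (Set.range (D n)) ∧ Dp μ p (D n) h < ⊤) ∧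
      ∀ f : M → N, Measurable f → IsSeparable (Set.range f) → Dp μ p f h < ⊤ →
        ∀ ε : ENNReal, 0 < ε → ∃ n, Dp μ p f (D n) < ε) :
    SeparableSpace N := by
  classical
  obtain ⟨f, hfm, hfs, hfD, hfne⟩ := hnontriv
  obtain ⟨D, hD, hDdense⟩ := hsepL
  have hp0 : p ≠ 0 := by
    intro h0; rw [h0] at hp; exact absurd hp (by simp)
  have hpR : 0 < p.toReal := ENNReal.toReal_pos hp0 hptop
  -- strong measurability of f, h
  have hfsm : StronglyMeasurable f :=
    stronglyMeasurable_iff_measurable_separable.mpr ⟨hfm, hfs⟩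
  have hhsm : StronglyMeasurable h :=
    stronglyMeasurable_iff_measurable_separable.mpr ⟨hm, hs⟩
  have hdistm : Measurable (fun x => dist (f x) (h x)) :=
    (hfsm.dist hhsm).measurable
  -- the separable closed set S
  set S : Set N := closure (Set.range h ∪ ⋃ n, Set.range (D n)) with hSdef
  have hSsep : IsSeparable S :=
    (hs.union (isSeparable_iUnion.mpr fun n => (hD n).2.1)).closure
  have hSclosed : IsClosed S := isClosed_closure
  -- the set where f and h differ has positive measure
  have hne_pos : 0 < μ {x | f x ≠ h x} := by
    rw [pos_iff_ne_zero]
    intro h0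
    exact hfne (ae_iff.mpr h0)
  -- find c > 0 with positive measure of {c ≤ dist (f x) (h x)}
  have hA : ∃ c : ℝ, 0 < c ∧ 0 < μ {x | c ≤ dist (f x) (h x)} := by
    by_contra hcon
    push_neg at hcon
    have hz : ∀ n : ℕ, μ {x | (1 : ℝ)/(n+1) ≤ dist (f x) (h x)} = 0 := by
      intro n
      have := hcon (1/(n+1)) (by positivity)
      simpa using le_antisymm this zero_le
    have hsub : {x | f x ≠ h x} ⊆ ⋃ n : ℕ, {x | (1 : ℝ)/(n+1) ≤ dist (f x) (h x)} := by
      intro x hx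
      have hd : 0 < dist (f x) (h x) := dist_pos.mpr hx
      obtain ⟨n, hn⟩ := exists_nat_one_div_lt hd
      exact mem_iUnion.mpr ⟨n, hn.le⟩
    have : μ {x | f x ≠ h x} = 0 :=
      measure_mono_null hsub (by
        exact measure_iUnion_null fun n => hz n)
    exact absurd this hne_pos.ne'
  obtain ⟨c, hc, hAc⟩ := hA
  set A : Set M := {x | c ≤ dist (f x) (h x)} with hAdef
  have hAm : MeasurableSet A := hdistm measurableSet_Ici
  -- A has finite measure
  have hAfin : μ A < ⊤ := by
    by_contra htop
    push_neg at htop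
    have hAtop : μ A = ⊤ := top_le_iff.mp htop
    have hbound : ∀ x, ‖A.indicator (fun _ => c) x‖ ≤ ‖dist (f x) (h x)‖ := by
      intro x
      by_cases hx : x ∈ A
      · rw [Set.indicator_of_mem hx]
        simp only [Real.norm_eq_abs, abs_of_pos hc, abs_of_nonneg dist_nonneg]
        exact hx
      · rw [Set.indicator_of_notMem hx]
        simp [dist_nonneg]
    have hle : eLpNorm (A.indicator fun _ => c) p μ ≤ Dp μ p f h :=
      eLpNorm_mono hbound
    rw [eLpNorm_indicator_const hAm hp0 hptop, hAtop] at hle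
    rw [ENNReal.top_rpow_of_pos (by positivity)] at hle
    have hcne : (‖c‖₊ : ENNReal) ≠ 0 := by
      simp [hc.ne', hc.le]
    rw [ENNReal.mul_top (a := ‖c‖ₑ) hcne] at hle
    exact absurd (top_le_iff.mp hle) hfD.ne
  -- find a point t in the separable hull of range h with B of positive measure
  have hs' := hs
  obtain ⟨T, hTcount, hTsub⟩ := hs
  have hB : ∃ t ∈ T, 0 < μ (A ∩ h ⁻¹' Metric.ball t 1) := by
    by_contra hcon
    push_neg at hcon
    have hsub : A ⊆ ⋃ t ∈ T, A ∩ h ⁻¹' Metric.ball t 1 := by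
      intro x hx
      have : h x ∈ closure T := hTsub (Set.mem_range_self x)
      obtain ⟨t, htT, htd⟩ := Metric.mem_closure_iff.mp this 1 one_pos
      exact Set.mem_biUnion htT ⟨hx, by simpa [Metric.mem_ball, dist_comm] using htd⟩
    have : μ A = 0 :=
      measure_mono_null hsub (by
        refine (measure_biUnion_null_iff hTcount).mpr fun t ht => ?_
        exact le_antisymm (hcon t ht) zero_le)
    exact absurd this hAc.ne'
  obtain ⟨t, htT, hBpos⟩ := hB
  set B : Set M := A ∩ h ⁻¹' Metric.ball t 1 with hBdef
  have hBm : MeasurableSet B := hAm.inter (hm measurableSet_ball)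
  have hBfin : μ B < ⊤ := lt_of_le_of_lt (measure_mono Set.inter_subset_left) hAfin
  -- claim: every point of N is in S
  have hmain : ∀ y : N, y ∈ S := by
    intro y
    by_contra hyS
    have hSne : S.Nonempty := by
      obtain ⟨x, hx⟩ := nonempty_of_measure_ne_zero hBpos.ne'
      exact ⟨h x, subset_closure (Or.inl (Set.mem_range_self x))⟩
    have hδ : 0 < Metric.infDist y S :=
      (hSclosed.notMem_iff_infDist_pos hSne).mp hyS
    set δ : ℝ := Metric.infDist y S with hδdef
    -- the test function g
    set g : M → N := B.piecewise (fun _ => y) h with hgdef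
    have hgm : Measurable g := Measurable.piecewise hBm measurable_const hm
    have hgs : IsSeparable (Set.range g) := by
      refine (((Set.finite_singleton y).isSeparable.union hs').mono ?_)
      rintro _ ⟨x, rfl⟩
      by_cases hx : x ∈ B
      · rw [hgdef, Set.piecewise_eq_of_mem _ _ _ hx]
        exact Or.inl rfl
      · rw [hgdef, Set.piecewise_eq_of_notMem _ _ _ hx]
        exact Or.inr (Set.mem_range_self x)
    have hgD : Dp μ p g h < ⊤ := by
      have hbound : ∀ x, ‖dist (g x) (h x)‖ ≤
          ‖B.indicator (fun _ => dist y t + 1) x‖ := by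
        intro x
        by_cases hx : x ∈ B
        · rw [Set.indicator_of_mem hx, hgdef, Set.piecewise_eq_of_mem _ _ _ hx]
          have h1 : dist (h x) t < 1 := hx.2
          have h2 : dist y (h x) ≤ dist y t + dist t (h x) := dist_triangle _ _ _
          rw [Real.norm_eq_abs, Real.norm_eq_abs, abs_of_nonneg dist_nonneg,
            abs_of_nonneg (by positivity)]
          rw [dist_comm t] at h2
          linarith
        · rw [Set.indicator_of_notMem hx, hgdef, Set.piecewise_eq_of_notMem _ _ _ hx]
          simp
      calc Dp μ p g h ≤ eLpNorm (B.indicator fun _ => dist y t + 1) p μ :=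
            eLpNorm_mono hbound
        _ = ‖dist y t + 1‖₊ * μ B ^ (1 / p.toReal) :=
            eLpNorm_indicator_const hBm hp0 hptop
        _ < ⊤ := ENNReal.mul_lt_top (by simp)
            (ENNReal.rpow_lt_top_of_nonneg (by positivity) hBfin.ne)
    -- the threshold
    set ε : ENNReal := (‖δ‖₊ : ENNReal) * μ B ^ (1 / p.toReal) with hεdef
    have hεpos : 0 < ε := by
      apply ENNReal.mul_pos
      · simp [hδ.ne', hδ.le]
      · exact (ENNReal.rpow_pos hBpos hBfin.ne).ne'
    obtain ⟨n, hn⟩ := hDdense g hgm hgs hgD ε hεpos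
    -- lower bound: Dp μ p g (D n) ≥ ε
    have hlow : ε ≤ Dp μ p g (D n) := by
      have hbound : ∀ x, ‖B.indicator (fun _ => δ) x‖ ≤ ‖dist (g x) (D n x)‖ := by
        intro x
        by_cases hx : x ∈ B
        · rw [Set.indicator_of_mem hx, hgdef, Set.piecewise_eq_of_mem _ _ _ hx]
          rw [Real.norm_eq_abs, Real.norm_eq_abs, abs_of_pos hδ,
            abs_of_nonneg dist_nonneg]
          exact Metric.infDist_le_dist_of_mem
            (subset_closure (Or.inr (Set.mem_iUnion.mpr ⟨n, Set.mem_range_self x⟩)))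
        · rw [Set.indicator_of_notMem hx]
          simp [dist_nonneg]
      have := eLpNorm_mono hbound (p := p) (μ := μ)
      rwa [eLpNorm_indicator_const hBm hp0 hptop] at this
    exact absurd hn (not_lt.mpr hlow)
  have : IsSeparable (Set.univ : Set N) := hSsep.mono fun y _ => hmain y
  exact isSeparable_univ_iff.mp this
end

section
/- Let $h: M \to N$ be bounded, measurable and separably valued. If the metric space $(N,d_N)$ is boundedly compact (closed bounded sets are compact), then the set of simple mappings is dense in $(L^\infty_h(M,N), D_\infty)$. -/
open MeasureTheory Set TopologicalSpace Filter

open Classical in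
private noncomputable def approxAux {M N : Type*} [PseudoMetricSpace N] (c : N) (r : ℝ)
    (f : M → N) : List N → M → N
  | [] => fun _ => c
  | y :: ys => fun x => if dist (f x) y < r then y else approxAux c r f ys x

private lemma approxAux_nil {M N : Type*} [PseudoMetricSpace N] (c : N) (r : ℝ) (f : M → N)
    (x : M) : approxAux c r f [] x = c := rfl

open Classical in
private lemma approxAux_cons {M N : Type*} [PseudoMetricSpace N] (c : N) (r : ℝ) (f : M → N)
    (y : N) (ys : List N) (x : M) :
    approxAux c r f (y :: ys) x = if dist (f x) y < r then y else approxAux c r f ys x := rfl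

private lemma approxAux_measurable {M N : Type*} [MeasurableSpace M] [PseudoMetricSpace N]
    [MeasurableSpace N] [OpensMeasurableSpace N] (c : N) (r : ℝ) {f : M → N}
    (hf : Measurable f) : ∀ l : List N, Measurable (approxAux c r f l)
  | [] => measurable_const
  | y :: ys => by
    have hms : MeasurableSet {x : M | dist (f x) y < r} := by
      have : {x : M | dist (f x) y < r} = f ⁻¹' Metric.ball y r := rfl
      rw [this]
      exact hf Metric.isOpen_ball.measurableSet
    have : (approxAux c r f (y :: ys)) = fun x =>
        if dist (f x) y < r then y else approxAux c r f ys x := by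
      funext x; exact approxAux_cons c r f y ys x
    rw [this]
    exact Measurable.ite hms measurable_const (approxAux_measurable c r hf ys)

private lemma approxAux_range {M N : Type*} [PseudoMetricSpace N] (c : N) (r : ℝ) (f : M → N) :
    ∀ l : List N, Set.range (approxAux c r f l) ⊆ insert c {y | y ∈ l}
  | [] => by rintro _ ⟨x, rfl⟩; simp [approxAux_nil]
  | y :: ys => by
    rintro _ ⟨x, rfl⟩
    rw [approxAux_cons]
    split
    · simp
    · have := approxAux_range c r f ys ⟨x, rfl⟩
      rcases this with h1 | h1
      · exact Or.inl h1
      · right; exact List.mem_cons_of_mem _ h1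

private lemma approxAux_dist {M N : Type*} [PseudoMetricSpace N] (c : N) (r : ℝ) (f : M → N) :
    ∀ l : List N, ∀ x : M, (∃ y ∈ l, dist (f x) y < r) →
      dist (approxAux c r f l x) (f x) < r
  | [], x, hx => by simp at hx
  | y :: ys, x, hx => by
    rw [approxAux_cons]
    split_ifs with hd
    · rw [dist_comm]; exact hd
    · apply approxAux_dist c r f ys x
      rcases hx with ⟨z, hz, hzd⟩
      rcases List.mem_cons.1 hz with rfl | hz
      · exact absurd hzd hd
      · exact ⟨z, hz, hzd⟩

theorem stmt16 {M N : Type*} [MeasurableSpace M] [MetricSpace N]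
    [MeasurableSpace N] [BorelSpace N] [ProperSpace N]
    (μ : Measure M)
    (h : M → N) (hm : Measurable h) (hs : IsSeparable (Set.range h))
    (hb : Bornology.IsBounded (Set.range h))
    (f : M → N) (hfm : Measurable f) (hfs : IsSeparable (Set.range f))
    (hfin : Dp μ ⊤ f h < ⊤) (ε : ENNReal) (hε : 0 < ε) :
    ∃ g : M → N, Measurable g ∧ (Set.range g).Finite ∧ Dp μ ⊤ g f < ε := by
  rcases isEmpty_or_nonempty N with hN | hN
  · have : IsEmpty M := Function.isEmpty f
    refine ⟨f, hfm, ?_, ?_⟩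
    · have : Set.range f = ∅ := Set.range_eq_empty f
      rw [this]; exact Set.finite_empty
    · have : Dp μ ⊤ f f = 0 := by simp [Dp, eLpNorm_exponent_top]
      rw [this]; exact hε
  · obtain ⟨c⟩ := hN
    obtain ⟨R, hR⟩ := hb.subset_closedBall c
    -- essential bound on dist f h
    set D : ENNReal := Dp μ ⊤ f h with hD
    have hDlt : D < ⊤ := hfin
    have hae : ∀ᵐ x ∂μ, dist (f x) (h x) ≤ D.toReal := by
      have h1 : ∀ᵐ x ∂μ, (‖dist (f x) (h x)‖₊ : ENNReal) ≤ D := by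
        have := ae_le_eLpNormEssSup (μ := μ) (f := fun x => dist (f x) (h x))
        simpa [hD, Dp, eLpNorm_exponent_top, enorm_eq_nnnorm] using this
      filter_upwards [h1] with x hx
      have := ENNReal.toReal_mono hDlt.ne hx
      simpa [Real.norm_eq_abs, abs_of_nonneg dist_nonneg] using this
    -- compact set containing f a.e.
    set K : Set N := Metric.closedBall c (R + D.toReal) with hK
    have hKc : IsCompact K := isCompact_closedBall c _
    have haeK : ∀ᵐ x ∂μ, f x ∈ K := by
      filter_upwards [hae] with x hx
      have h2 : dist (h x) c ≤ R := hR ⟨x, rfl⟩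
      have := dist_triangle (f x) (h x) c
      simp only [hK, Metric.mem_closedBall]
      linarith
    -- choose real radius below ε
    obtain ⟨δ, hδ0, hδε⟩ := ENNReal.lt_iff_exists_nnreal_btwn.1 hε
    have hδ0' : (0 : ℝ) < δ := by exact_mod_cast hδ0
    -- cover K by finitely many balls of radius δ
    obtain ⟨t, hts, htfin, htcov⟩ := hKc.finite_cover_balls (e := (δ : ℝ)) hδ0'
    set l : List N := htfin.toFinset.toList with hl
    refine ⟨approxAux c (δ : ℝ) f l, approxAux_measurable c _ hfm l, ?_, ?_⟩
    · apply Set.Finite.subset _ (approxAux_range c _ f l)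
      exact Set.Finite.insert c (List.finite_toSet l)
    · have hbd : ∀ᵐ x ∂μ, ‖dist (approxAux c (δ : ℝ) f l x) (f x)‖ ≤ (δ : ℝ) := by
        filter_upwards [haeK] with x hx
        have hcov := htcov hx
        simp only [Set.mem_iUnion, Metric.mem_ball] at hcov
        obtain ⟨y, hy, hyd⟩ := hcov
        have hyl : y ∈ l := by simp [hl, htfin.mem_toFinset, hy]
        have := approxAux_dist c (δ : ℝ) f l x ⟨y, hyl, hyd⟩
        rw [Real.norm_eq_abs, abs_of_nonneg dist_nonneg]
        exact this.le
      calc Dp μ ⊤ (approxAux c (δ : ℝ) f l) f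
          ≤ ENNReal.ofReal (δ : ℝ) := by
            rw [Dp, eLpNorm_exponent_top]
            exact eLpNormEssSup_le_of_ae_bound hbd
        _ = (δ : ENNReal) := ENNReal.ofReal_coe_nnreal
        _ < ε := hδε
end

section
/- Let $M$ be a normal topological space, $\Sigma_M \supseteq \mathcal{B}(M)$, and suppose $\mu_M$ is outer regular on closed sets of finite measure with respect to open sets, and inner regular on sets of finite measure with respect to closed sets. Let $N$ be a path-connected metric space and $p \in [1,\infty)$. Then for every simple mapping $g: M \to N$ that is constant equal to $z_0$ outside some measurable set of finite measure, and every $\varepsilon > 0$, there exists a continuous mapping $g_\varepsilon: M \to N$ with compact range such that $D_p(g, g_\varepsilon) < \varepsilon$ and the closure of $g_\varepsilon^{-1}(N \setminus \{z_0\})$ has finite $\mu_M$-measure. -/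
open MeasureTheory Set TopologicalSpace Filter

lemma exists_sep {M : Type*} [TopologicalSpace M] [NormalSpace M]
    {C D : Set M} (hC : IsClosed C) (hD : IsClosed D) (hCD : Disjoint C D) :
    ∃ φ : M → ℝ, Continuous φ ∧ Set.EqOn φ 1 C ∧ Set.EqOn φ 0 D ∧
      (∀ x, φ x ∈ Set.Icc (0:ℝ) 1) ∧
      ((∀ x, φ x = 0 ∨ φ x = 1) ∨ Set.Ioo (0:ℝ) 1 ⊆ Set.range φ) := by
  classical
  obtain ⟨f, hf0, hf1, hf01⟩ := exists_continuous_zero_one_of_isClosed hD hC hCD.symm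
  by_cases h : Set.Ioo (0:ℝ) 1 ⊆ Set.range f
  · exact ⟨f, f.continuous, hf1, hf0, hf01, Or.inr h⟩
  · obtain ⟨α, hα, hαr⟩ := not_subset.mp h
    refine ⟨fun x => if α < f x then 1 else 0, ?_, ?_, ?_, ?_,
      Or.inl fun x => by by_cases hx : α < f x <;> simp [hx]⟩
    · apply Continuous.if ?_ continuous_const continuous_const
      have hclopen : IsClopen {x | α < f x} := by
        refine ⟨?_, ?_⟩
        · have he : {x | α < f x} = f ⁻¹' (Set.Ici α) := by
            ext x
            simp only [mem_setOf_eq, mem_preimage, mem_Ici]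
            constructor
            · exact le_of_lt
            · intro hle
              rcases lt_or_eq_of_le hle with h' | h'
              · exact h'
              · exact absurd ⟨x, h'.symm⟩ hαr
          rw [he]
          exact isClosed_Ici.preimage f.continuous
        · have he : {x | α < f x} = f ⁻¹' (Set.Ioi α) := rfl
          rw [he]
          exact isOpen_Ioi.preimage f.continuous
      rw [hclopen.frontier_eq]
      intro a ha
      exact absurd ha (by simp)
    · intro x hx
      have h1 : f x = 1 := hf1 hx
      simp only [h1]
      rw [if_pos hα.2]
      rfl
    · intro x hx
      have h0 : f x = 0 := hf0 hx
      simp only [h0]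
      rw [if_neg (by exact not_lt.mpr hα.1.le)]
      rfl
    · intro x
      by_cases hx : α < f x <;> simp [hx]

theorem stmt18 {M N : Type*} [TopologicalSpace M] [NormalSpace M]
    [MeasurableSpace M] [OpensMeasurableSpace M]
    [MetricSpace N] [PathConnectedSpace N] [MeasurableSpace N] [BorelSpace N]
    (μ : Measure M)
    (houter : ∀ C : Set M, IsClosed C → μ C ≠ ⊤ → ∀ ε : ENNReal, 0 < ε →
      ∃ U : Set M, IsOpen U ∧ C ⊆ U ∧ μ U ≤ μ C + ε)
    (hinner : ∀ B : Set M, MeasurableSet B → μ B ≠ ⊤ → ∀ ε : ENNReal, 0 < ε →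
      ∃ C : Set M, IsClosed C ∧ C ⊆ B ∧ μ B ≤ μ C + ε)
    (p : ENNReal) (hp : 1 ≤ p) (hptop : p ≠ ⊤)
    (g : M → N) (hgm : Measurable g) (hgfin : (Set.range g).Finite)
    (B : Set M) (hB : MeasurableSet B) (hBfin : μ B ≠ ⊤)
    (z₀ : N) (hconst : ∀ x ∉ B, g x = z₀)
    (ε : ENNReal) (hε : 0 < ε) :
    ∃ gε : M → N, Continuous gε ∧ IsCompact (Set.range gε) ∧
      Dp μ p g gε < ε ∧ μ (closure {x | gε x ≠ z₀}) < ⊤ := by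
  classical
  have hp0 : p ≠ 0 := (lt_of_lt_of_le one_pos hp).ne'
  have hpR : 0 < p.toReal := ENNReal.toReal_pos hp0 hptop
  -- index set
  set t : Finset N := hgfin.toFinset.erase z₀ with ht
  have htmem : ∀ y ∈ t, y ≠ z₀ ∧ y ∈ Set.range g := by
    intro y hy
    exact ⟨(Finset.mem_erase.mp hy).1, hgfin.mem_toFinset.mp (Finset.mem_erase.mp hy).2⟩
  set A : N → Set M := fun y => g ⁻¹' {y} with hA
  have hAmeas : ∀ y, MeasurableSet (A y) := fun y => hgm isClosed_singleton.measurableSet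
  have hAdisj : ∀ y z : N, y ≠ z → Disjoint (A y) (A z) := by
    intro y z hyz
    rw [Set.disjoint_left]
    intro x hx hx'
    exact hyz (hx.symm.trans hx')
  have hAB : ∀ y ∈ t, A y ⊆ B := by
    intro y hy x hx
    by_contra hxB
    have hgx : g x = z₀ := hconst x hxB
    have hxy : g x = y := hx
    exact (htmem y hy).1 (hxy.symm.trans hgx)
  have hAfin : ∀ y ∈ t, μ (A y) ≠ ⊤ :=
    fun y hy => ne_top_of_le_ne_top hBfin (measure_mono (hAB y hy))
  -- paths
  set Γ : N → ℝ → N := fun y s => (PathConnectedSpace.somePath z₀ y).extend (3 * s - 1) with hΓ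
  have hΓcont : ∀ y, Continuous (Γ y) := by
    intro y
    exact (PathConnectedSpace.somePath z₀ y).continuous_extend.comp
      (by continuity)
  have hΓ0 : ∀ (y : N) (s : ℝ), s ≤ 1/3 → Γ y s = z₀ := by
    intro y s hs
    have : (3:ℝ) * s - 1 ≤ 0 := by linarith
    exact (PathConnectedSpace.somePath z₀ y).extend_of_le_zero this
  have hΓ1 : ∀ (y : N) (s : ℝ), 2/3 ≤ s → Γ y s = y := by
    intro y s hs
    have : (1:ℝ) ≤ 3 * s - 1 := by linarith
    exact (PathConnectedSpace.somePath z₀ y).extend_of_one_le this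
  have hclmem : ∀ s : ℝ, min (2/3) (max (1/3) s) ∈ Set.Icc (1/3 : ℝ) (2/3) := by
    intro s
    constructor
    · exact le_min (by norm_num) (le_max_left _ _)
    · exact min_le_left _ _
  have hΓclamp : ∀ (y : N) (s : ℝ), Γ y s = Γ y (min (2/3) (max (1/3) s)) := by
    intro y s
    rcases le_total s (1/3) with h1 | h1
    · have : min (2/3) (max (1/3) s) = 1/3 := by
        rw [max_eq_left h1, min_eq_right (by norm_num)]
      rw [this, hΓ0 y s h1, hΓ0 y (1/3) le_rfl]
    · rcases le_total s (2/3) with h2 | h2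
      · have : min (2/3) (max (1/3) s) = s := by
          rw [max_eq_right h1, min_eq_right h2]
        rw [this]
      · have : min (2/3) (max (1/3) s) = 2/3 := by
          rw [max_eq_right (le_trans (by norm_num) h2), min_eq_left h2]
        rw [this, hΓ1 y s h2, hΓ1 y (2/3) le_rfl]
  have hrex : ∀ y : N, ∃ r : ℝ, 0 ≤ r ∧ ∀ s, dist (Γ y s) z₀ ≤ r := by
    intro y
    have hK : IsCompact (Γ y '' Set.Icc (0:ℝ) 1) := isCompact_Icc.image (hΓcont y)
    obtain ⟨r₀, hr₀⟩ := hK.isBounded.subset_closedBall z₀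
    refine ⟨max r₀ 0, le_max_right _ _, fun s => ?_⟩
    have hmem : Γ y s ∈ Γ y '' Set.Icc (0:ℝ) 1 := by
      rw [hΓclamp y s]
      refine ⟨min (2/3) (max (1/3) s), ?_, rfl⟩
      have := hclmem s
      exact ⟨le_trans (by norm_num) this.1, le_trans this.2 (by norm_num)⟩
    have := hr₀ hmem
    rw [Metric.mem_closedBall] at this
    exact le_trans this (le_max_left _ _)
  choose r hr0 hrb using hrex
  -- constants
  set Rg : ℝ := ∑ v ∈ hgfin.toFinset, dist v z₀ with hRg
  have hRgle : ∀ x : M, dist (g x) z₀ ≤ Rg := by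
    intro x
    exact Finset.single_le_sum (f := fun v => dist v z₀) (fun i _ => dist_nonneg) (hgfin.mem_toFinset.mpr ⟨x, rfl⟩)
  set Cst : ℝ := Rg + ∑ y ∈ t, r y with hCstdef
  have hRg0 : 0 ≤ Rg := Finset.sum_nonneg fun i _ => dist_nonneg
  have hsr0 : 0 ≤ ∑ y ∈ t, r y := Finset.sum_nonneg fun i _ => hr0 i
  have hCst0 : 0 ≤ Cst := add_nonneg hRg0 hsr0
  set cE : ENNReal := ENNReal.ofReal Cst with hcEdef
  have hcEtop : cE ≠ ⊤ := ENNReal.ofReal_ne_top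
  set k : ENNReal := (t.card : ENNReal) with hk
  have hktop : k ≠ ⊤ := ENNReal.natCast_ne_top _
  set d : ENNReal := (min ε 1) / (2 * (cE + 1)) with hd
  have hd0 : d ≠ 0 := by
    have hm : min ε 1 ≠ 0 := (lt_min hε zero_lt_one).ne'
    exact (ENNReal.div_pos hm (ENNReal.mul_ne_top (by norm_num) (by simp [hcEtop]))).ne'
  have hdtop : d ≠ ⊤ := by
    exact (ENNReal.div_lt_top (by simp) (by simp [hcEtop, ENNReal.add_eq_top])).ne
  set η : ENNReal := d ^ p.toReal / (2 * k + 1) with hη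
  have hη0 : 0 < η := by
    apply ENNReal.div_pos (ENNReal.rpow_pos (hd0.bot_lt) hdtop).ne'
    exact ENNReal.add_ne_top.mpr ⟨ENNReal.mul_ne_top (by norm_num) hktop, ENNReal.one_ne_top⟩
  have hηtop : η ≠ ⊤ := by
    exact (ENNReal.div_lt_top (ENNReal.rpow_ne_top_of_nonneg hpR.le hdtop) (by simp)).ne
  -- inner regular closed sets
  have hCex : ∀ y : N, ∃ C : Set M, IsClosed C ∧ C ⊆ A y ∧ (y ∈ t → μ (A y \ C) ≤ η) ∧
      (y ∉ t → C = ∅) := by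
    intro y
    by_cases hy : y ∈ t
    · obtain ⟨C, hC1, hC2, hC3⟩ := hinner (A y) (hAmeas y) (hAfin y hy) η hη0
      refine ⟨C, hC1, hC2, fun _ => ?_, fun h => absurd hy h⟩
      have hCfin : μ C ≠ ⊤ := ne_top_of_le_ne_top (hAfin y hy) (measure_mono hC2)
      rw [measure_diff hC2 hC1.measurableSet.nullMeasurableSet hCfin]
      exact tsub_le_iff_right.mpr (by rw [add_comm]; exact hC3)
    · exact ⟨∅, isClosed_empty, empty_subset _, fun h => absurd h hy, fun _ => rfl⟩
  choose Cs hCclosed hCsub hCsmall hCempty using hCex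
  have hCfin : ∀ y, μ (Cs y) ≠ ⊤ := by
    intro y
    by_cases hy : y ∈ t
    · exact ne_top_of_le_ne_top (hAfin y hy) (measure_mono (hCsub y))
    · rw [hCempty y hy]; simp
  have hCdisj : ∀ y z : N, y ≠ z → Disjoint (Cs y) (Cs z) :=
    fun y z hyz => (hAdisj y z hyz).mono (hCsub y) (hCsub z)
  -- outer regular open sets
  have hUex : ∀ y : N, ∃ U : Set M, IsOpen U ∧ Cs y ⊆ U ∧ (y ∈ t → μ U ≤ μ (Cs y) + η) := by
    intro y
    by_cases hy : y ∈ t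
    · obtain ⟨U, hU1, hU2, hU3⟩ := houter (Cs y) (hCclosed y) (hCfin y) η hη0
      exact ⟨U, hU1, hU2, fun _ => hU3⟩
    · refine ⟨∅, isOpen_empty, ?_, fun h => absurd h hy⟩
      rw [hCempty y hy]
  choose U hUopen hCU hUsmall using hUex
  -- pairwise separation
  have hWex : ∀ y z : N, ∃ W : Set M × Set M, IsOpen W.1 ∧ IsOpen W.2 ∧ Cs y ⊆ W.1 ∧
      Cs z ⊆ W.2 ∧ (y ≠ z → Disjoint W.1 W.2) := by
    intro y z
    by_cases hyz : y = z
    · exact ⟨(Set.univ, Set.univ), isOpen_univ, isOpen_univ, subset_univ _, subset_univ _,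
        fun h => absurd hyz h⟩
    · obtain ⟨u, v, hu, hv, hyu, hzv, huv⟩ :=
        NormalSpace.normal (Cs y) (Cs z) (hCclosed y) (hCclosed z) (hCdisj y z hyz)
      exact ⟨(u, v), hu, hv, hyu, hzv, fun _ => huv⟩
  choose W hW1 hW2 hWy hWz hWd using hWex
  set O : N → Set M := fun y => U y ∩ ⋂ z ∈ t.erase y, ((W y z).1 ∩ (W z y).2) with hO
  have hOopen : ∀ y, IsOpen (O y) := by
    intro y
    exact (hUopen y).inter (isOpen_biInter_finset fun z _ => (hW1 y z).inter (hW2 z y))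
  have hCO : ∀ y, Cs y ⊆ O y := by
    intro y x hx
    refine ⟨hCU y hx, ?_⟩
    simp only [Set.mem_iInter]
    intro z _
    exact ⟨hWy y z hx, hWz z y hx⟩
  have hOU : ∀ y, O y ⊆ U y := fun y => Set.inter_subset_left
  have hOdisj : ∀ y ∈ t, ∀ z ∈ t, y ≠ z → Disjoint (O y) (O z) := by
    intro y hy z hz hyz
    have h1 : O y ⊆ (W y z).1 := by
      intro x hx
      have := hx.2
      simp only [Set.mem_iInter] at this
      exact (this z (Finset.mem_erase.mpr ⟨hyz.symm, hz⟩)).1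
    have h2 : O z ⊆ (W y z).2 := by
      intro x hx
      have := hx.2
      simp only [Set.mem_iInter] at this
      exact (this y (Finset.mem_erase.mpr ⟨hyz, hy⟩)).2
    exact (hWd y z hyz).mono h1 h2
  -- shrink to closure inside O
  have hVex : ∀ y, ∃ V : Set M, IsOpen V ∧ Cs y ⊆ V ∧ closure V ⊆ O y :=
    fun y => normal_exists_closure_subset (hCclosed y) (hOopen y) (hCO y)
  choose V hVopen hCV hVcl using hVex
  have hVO : ∀ y, V y ⊆ O y := fun y => subset_closure.trans (hVcl y)
  have hVdisj : ∀ y ∈ t, ∀ z ∈ t, y ≠ z → Disjoint (V y) (V z) :=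
    fun y hy z hz hyz => ((hOdisj y hy z hz hyz).mono (hVO y) (hVO z))
  -- separating functions
  have hφex : ∀ y, ∃ φ : M → ℝ, Continuous φ ∧ Set.EqOn φ 1 (Cs y) ∧ Set.EqOn φ 0 (V y)ᶜ ∧
      (∀ x, φ x ∈ Set.Icc (0:ℝ) 1) ∧
      ((∀ x, φ x = 0 ∨ φ x = 1) ∨ Set.Ioo (0:ℝ) 1 ⊆ Set.range φ) := by
    intro y
    apply exists_sep (hCclosed y) (hVopen y).isClosed_compl
    exact Set.disjoint_left.mpr fun x hxC hxV => hxV (hCV y hxC)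
  choose φ hφc hφ1 hφ0 hφ01 hφdich using hφex
  -- the approximating map
  set gε : M → N := fun x => if h : ∃ y, y ∈ t ∧ x ∈ V y then Γ h.choose (φ h.choose x) else z₀
    with hgεdef
  have hgεV : ∀ y ∈ t, ∀ x ∈ V y, gε x = Γ y (φ y x) := by
    intro y hy x hx
    have h : ∃ y, y ∈ t ∧ x ∈ V y := ⟨y, hy, hx⟩
    have hch : h.choose = y := by
      obtain ⟨hyt, hxV⟩ := h.choose_spec
      by_contra hne
      exact Set.disjoint_left.mp (hVdisj h.choose hyt y hy hne) hxV hx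
    simp only [hgεdef, dif_pos h]
    rw [hch]
  have hgεout : ∀ x, (∀ y ∈ t, x ∉ V y) → gε x = z₀ := by
    intro x hx
    have h : ¬ ∃ y, y ∈ t ∧ x ∈ V y := by
      rintro ⟨y, hy, hxy⟩
      exact hx y hy hxy
    simp only [hgεdef, dif_neg h]
  -- continuity
  have hbound : ∀ x, dist (gε x) z₀ ≤ ∑ y ∈ t, dist (Γ y (φ y x)) z₀ := by
    intro x
    by_cases h : ∃ y, y ∈ t ∧ x ∈ V y
    · obtain ⟨y, hy, hx⟩ := h
      rw [hgεV y hy x hx]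
      exact Finset.single_le_sum (f := fun y => dist (Γ y (φ y x)) z₀)
        (fun i _ => dist_nonneg) hy
    · rw [hgεout x (fun y hy hxy => h ⟨y, hy, hxy⟩)]
      simp only [dist_self]
      exact Finset.sum_nonneg fun i _ => dist_nonneg
  have hsum_cont : Continuous (fun x => ∑ y ∈ t, dist (Γ y (φ y x)) z₀) := by
    apply continuous_finset_sum
    intro y _
    exact ((hΓcont y).comp (hφc y)).dist continuous_const
  have hgεcont : Continuous gε := by
    rw [continuous_iff_continuousAt]
    intro x₀
    by_cases h : ∃ y, y ∈ t ∧ x₀ ∈ V y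
    · obtain ⟨y, hy, hx⟩ := h
      have hc : ContinuousAt (fun x => Γ y (φ y x)) x₀ :=
        ((hΓcont y).comp (hφc y)).continuousAt
      apply hc.congr
      filter_upwards [(hVopen y).mem_nhds hx] with x hx'
      exact (hgεV y hy x hx').symm
    · have hx0 : gε x₀ = z₀ := hgεout x₀ (fun y hy hxy => h ⟨y, hy, hxy⟩)
      unfold ContinuousAt
      rw [hx0, tendsto_iff_dist_tendsto_zero]
      apply squeeze_zero (fun x => dist_nonneg) hbound
      have hval : (fun x => ∑ y ∈ t, dist (Γ y (φ y x)) z₀) x₀ = 0 := by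
        apply Finset.sum_eq_zero
        intro y hy
        have hz : φ y x₀ = 0 := hφ0 y (fun hxy => h ⟨y, hy, hxy⟩)
        rw [hz, hΓ0 y 0 (by norm_num), dist_self]
      have h2 := hsum_cont.tendsto x₀
      simp only [] at hval
      rwa [hval] at h2
  -- compact range
  have hrange : IsCompact (Set.range gε) := by
    have hdecomp : Set.range gε = (⋃ y ∈ t, gε '' (V y)) ∪ gε '' ((⋃ y ∈ t, V y)ᶜ) := by
      rw [← Set.image_univ, ← Set.union_compl_self (⋃ y ∈ t, V y), Set.image_union]
      congr 1
      rw [Set.image_iUnion₂]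
    rw [hdecomp]
    apply IsCompact.union
    · apply t.finite_toSet.isCompact_biUnion
      intro y hy
      have himg : gε '' V y = Γ y '' (φ y '' V y) := by
        rw [← Set.image_comp]
        exact Set.image_congr fun x hx => hgεV y hy x hx
      rw [himg]
      rcases hφdich y with hd2 | hd2
      · apply Set.Finite.isCompact
        apply Set.Finite.image
        apply Set.Finite.subset ((Set.finite_singleton (1:ℝ)).insert 0)
        rintro s ⟨x, _, rfl⟩
        rcases hd2 x with h' | h' <;> simp [h']
      · have heq : Γ y '' (φ y '' V y) = Γ y '' Set.Icc (0:ℝ) 1 := by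
          apply Set.Subset.antisymm
          · apply Set.image_mono
            rintro s ⟨x, _, rfl⟩
            exact hφ01 y x
          · rintro n ⟨s, hs, rfl⟩
            set s' := min (2/3) (max (1/3) s) with hs'def
            have hs'mem : s' ∈ Set.Ioo (0:ℝ) 1 := by
              have := hclmem s
              exact ⟨lt_of_lt_of_le (by norm_num) this.1, lt_of_le_of_lt this.2 (by norm_num)⟩
            obtain ⟨x, hx⟩ := hd2 hs'mem
            have hxV : x ∈ V y := by
              by_contra hxv
              have := hφ0 y hxv
              rw [this] at hx
              exact hs'mem.1.ne hx
            exact ⟨φ y x, Set.mem_image_of_mem _ hxV, by rw [hx, ← hΓclamp y s]⟩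
        rw [heq]
        exact isCompact_Icc.image (hΓcont y)
    · apply Set.Finite.isCompact
      apply Set.Finite.subset (Set.finite_singleton z₀)
      rintro n ⟨x, hx, rfl⟩
      have : gε x = z₀ := by
        apply hgεout
        intro y hy hxy
        exact hx (Set.mem_biUnion hy hxy)
      simp [this]
  -- closure of support has finite measure
  have hUfin : ∀ y ∈ t, μ (U y) ≠ ⊤ := by
    intro y hy
    apply ne_top_of_le_ne_top _ (hUsmall y hy)
    exact ENNReal.add_ne_top.mpr ⟨hCfin y, hηtop⟩
  have hclosuremeas : μ (closure {x | gε x ≠ z₀}) < ⊤ := by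
    have hsub : {x | gε x ≠ z₀} ⊆ ⋃ y ∈ t, V y := by
      intro x hx
      by_contra hxn
      apply hx
      apply hgεout
      intro y hy hxy
      exact hxn (Set.mem_biUnion hy hxy)
    have hclosed : IsClosed (⋃ y ∈ t, closure (V y)) :=
      t.finite_toSet.isClosed_biUnion fun y _ => isClosed_closure
    have hcl : closure {x | gε x ≠ z₀} ⊆ ⋃ y ∈ t, closure (V y) := by
      apply closure_minimal _ hclosed
      exact hsub.trans (Set.iUnion₂_mono fun y _ => subset_closure)
    calc μ (closure {x | gε x ≠ z₀}) ≤ ∑ y ∈ t, μ (closure (V y)) :=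
          le_trans (measure_mono hcl) (measure_biUnion_finset_le t _)
      _ < ⊤ := by
          apply ENNReal.sum_lt_top.mpr
          intro y hy
          apply lt_of_le_of_lt (measure_mono ((hVcl y).trans (hOU y)))
          exact lt_top_iff_ne_top.mpr (hUfin y hy)
  -- the exceptional set
  set E : Set M := ⋃ y ∈ t, ((A y ∪ V y) \ Cs y) with hE
  have hEmeas : MeasurableSet E := by
    apply Finset.measurableSet_biUnion
    intro y _
    exact ((hAmeas y).union (hVopen y).measurableSet).diff (hCclosed y).measurableSet
  have hagree : ∀ x ∉ E, g x = gε x := by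
    intro x hx
    have hnot : ∀ y ∈ t, x ∈ A y ∪ V y → x ∈ Cs y := by
      intro y hy hxy
      by_contra hxc
      exact hx (Set.mem_biUnion hy ⟨hxy, hxc⟩)
    by_cases hc : ∃ y, y ∈ t ∧ x ∈ Cs y
    · obtain ⟨y, hy, hxc⟩ := hc
      have hgx : g x = y := hCsub y hxc
      have hgεx : gε x = Γ y (φ y x) := hgεV y hy x (hCV y hxc)
      rw [hgx, hgεx, hφ1 y hxc]
      exact (hΓ1 y 1 (by norm_num)).symm
    · have hnA : ∀ y ∈ t, x ∉ A y := by
        intro y hy hxA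
        exact hc ⟨y, hy, hnot y hy (Or.inl hxA)⟩
      have hnV : ∀ y ∈ t, x ∉ V y := by
        intro y hy hxV
        exact hc ⟨y, hy, hnot y hy (Or.inr hxV)⟩
      have hgz : g x = z₀ := by
        by_contra hgz
        have hmem : g x ∈ t := Finset.mem_erase.mpr ⟨hgz, hgfin.mem_toFinset.mpr ⟨x, rfl⟩⟩
        exact hnA (g x) hmem rfl
      rw [hgz, hgεout x hnV]
  -- measure of E
  have hEsmall : μ E ≤ 2 * k * η := by
    calc μ E ≤ ∑ y ∈ t, μ ((A y ∪ V y) \ Cs y) := measure_biUnion_finset_le t _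
      _ ≤ ∑ y ∈ t, (2 * η) := by
          apply Finset.sum_le_sum
          intro y hy
          have hsplit : (A y ∪ V y) \ Cs y ⊆ (A y \ Cs y) ∪ (U y \ Cs y) := by
            rintro x ⟨hx, hxc⟩
            rcases hx with hx | hx
            · exact Or.inl ⟨hx, hxc⟩
            · exact Or.inr ⟨(hVO y).trans (hOU y) hx, hxc⟩
          have hU : μ (U y \ Cs y) ≤ η := by
            rw [measure_diff (hCU y) (hCclosed y).measurableSet.nullMeasurableSet (hCfin y)]
            exact tsub_le_iff_right.mpr (by rw [add_comm]; exact hUsmall y hy)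
          calc μ ((A y ∪ V y) \ Cs y) ≤ μ ((A y \ Cs y) ∪ (U y \ Cs y)) := measure_mono hsplit
            _ ≤ μ (A y \ Cs y) + μ (U y \ Cs y) := measure_union_le _ _
            _ ≤ η + η := add_le_add (hCsmall y hy) hU
            _ = 2 * η := by ring
      _ = k * (2 * η) := by rw [Finset.sum_const, nsmul_eq_mul]
      _ = 2 * k * η := by ring
  -- pointwise bound
  have hptwise : ∀ x, dist (g x) (gε x) ≤ E.indicator (fun _ => Cst) x := by
    intro x
    by_cases hx : x ∈ E
    · rw [Set.indicator_of_mem hx]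
      have h1 : dist (g x) (gε x) ≤ dist (g x) z₀ + dist (gε x) z₀ := by
        rw [dist_comm (gε x) z₀]
        exact dist_triangle _ _ _
      apply le_trans h1
      apply add_le_add (hRgle x)
      by_cases h : ∃ y, y ∈ t ∧ x ∈ V y
      · obtain ⟨y, hy, hxy⟩ := h
        rw [hgεV y hy x hxy]
        exact le_trans (hrb y _) (Finset.single_le_sum (f := r) (fun i _ => hr0 i) hy)
      · rw [hgεout x (fun y hy hxy => h ⟨y, hy, hxy⟩), dist_self]
        exact hsr0
    · rw [Set.indicator_of_notMem hx, hagree x hx, dist_self]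
  -- the Lp estimate
  have hDp : Dp μ p g gε < ε := by
    have h1 : Dp μ p g gε ≤ eLpNorm (E.indicator fun _ => Cst) p μ := by
      apply eLpNorm_mono_real
      intro x
      rw [Real.norm_eq_abs, abs_of_nonneg dist_nonneg]
      exact hptwise x
    have h2 : eLpNorm (E.indicator fun _ : M => Cst) p μ = cE * μ E ^ (1 / p.toReal) := by
      rw [eLpNorm_indicator_const hEmeas hp0 hptop]
      congr 1
      rw [hcEdef, ← ofReal_norm, Real.norm_of_nonneg hCst0]
    have h3 : (2 : ENNReal) * k + 1 ≠ 0 := by simp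
    have h4 : (2 : ENNReal) * k + 1 ≠ ⊤ :=
      ENNReal.add_ne_top.mpr ⟨ENNReal.mul_ne_top (by norm_num) hktop, ENNReal.one_ne_top⟩
    have hkd : 2 * k * η ≤ d ^ p.toReal := by
      rw [hη]
      calc 2 * k * (d ^ p.toReal / (2 * k + 1))
          ≤ (2 * k + 1) * (d ^ p.toReal / (2 * k + 1)) :=
            mul_le_mul_left le_self_add _
        _ = d ^ p.toReal := ENNReal.mul_div_cancel h3 h4
    have h5 : μ E ^ (1 / p.toReal) ≤ d := by
      have := ENNReal.rpow_le_rpow (hEsmall.trans hkd) (le_of_lt (by positivity : (0:ℝ) < 1 / p.toReal))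
      rwa [← ENNReal.rpow_mul, mul_one_div_cancel hpR.ne', ENNReal.rpow_one] at this
    have h6 : cE * μ E ^ (1 / p.toReal) ≤ (cE + 1) * d :=
      mul_le_mul' le_self_add h5
    have h7 : (cE + 1) * d = min ε 1 / 2 := by
      rw [hd]
      have hne0 : cE + 1 ≠ 0 := by simp
      have hnetop : cE + 1 ≠ ⊤ := ENNReal.add_ne_top.mpr ⟨hcEtop, ENNReal.one_ne_top⟩
      have hdd : (min ε 1) / (2 * (cE + 1)) = (min ε 1 / 2) / (cE + 1) := by
        rw [div_eq_mul_inv, div_eq_mul_inv, div_eq_mul_inv,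
          ENNReal.mul_inv (Or.inl (by norm_num)) (Or.inl (by norm_num)), mul_assoc]
      rw [hdd, ENNReal.mul_div_cancel hne0 hnetop]
    have h8 : min ε 1 / 2 < ε := by
      rcases le_total ε 1 with hle | hle
      · rw [min_eq_left hle]
        exact ENNReal.half_lt_self hε.ne' (ne_top_of_le_ne_top ENNReal.one_ne_top hle)
      · rw [min_eq_right hle]
        exact lt_of_lt_of_le (ENNReal.half_lt_self one_ne_zero ENNReal.one_ne_top) hle
    calc Dp μ p g gε ≤ eLpNorm (E.indicator fun _ : M => Cst) p μ := h1
      _ = cE * μ E ^ (1 / p.toReal) := h2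
      _ ≤ (cE + 1) * d := h6
      _ = min ε 1 / 2 := h7
      _ < ε := h8
  exact ⟨gε, hgεcont, hrange, hDp, hclosuremeas⟩
end
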